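/- For every t ∈ ℕ there exist a finite positive Borel measure μ_{0,t} vanishing outside X⁰ such that (f^t)_#μ_{0,t} = λ_{Y^t}, and, setting ν_t := Σ_{i=0}^{t-1} f^i_#μ_{0,t}, the per-step Liouville equation λ_{Y^t} + ν_t = f_#ν_t + μ_{0,t} holds as an equality of measures on ℝ^n. -/

import Mathlib

open MeasureTheory ProbabilityTheory
open scoped ProbabilityTheory ENNReal

lemma mvpoly_differentiable {n : ℕ} (p : MvPolynomial (Fin n) ℝ) :
    Differentiable ℝ fun x : Fin n → ℝ => MvPolynomial.eval x p := by
  induction p using MvPolynomial.induction_on with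
  | C a => simpa using differentiable_const a
  | add p q hp hq => simp only [MvPolynomial.eval_add]; exact hp.add hq
  | mul_X p i hp =>
      simp only [MvPolynomial.eval_mul, MvPolynomial.eval_X]; exact
        hp.mul (differentiable_pi.mp differentiable_id i)

lemma measure_map_finset_sum {α : Type*} [MeasurableSpace α] {g : α → α} (hg : Measurable g)
    (s : Finset ℕ) (μ : ℕ → Measure α) :
    Measure.map g (∑ i ∈ s, μ i) = ∑ i ∈ s, Measure.map g (μ i) := by
  classical
  induction s using Finset.induction with
  | empty => simp
  | insert _ _ h ih => simp [Finset.sum_insert h, Measure.map_add _ _ hg, ih]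


/-- Per-step Liouville equation: for every `t` there is a finite positive Borel
measure `μ_{0,t}` vanishing outside `X⁰` with `(f^t)_# μ_{0,t} = λ_{Y^t}`, and with
`ν_t = ∑_{i<t} (f^i)_# μ_{0,t}` one has `λ_{Y^t} + ν_t = f_# ν_t + μ_{0,t}`. -/
theorem per_step_liouville (n : ℕ) (hn : 1 ≤ n)
    (f : (Fin n → ℝ) → (Fin n → ℝ))
    (hfpoly : ∀ i, ∃ p : MvPolynomial (Fin n) ℝ, ∀ x, f x i = MvPolynomial.eval x p)
    (X0 X : Set (Fin n → ℝ)) (hX0 : IsCompact X0) (hX : IsCompact X)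
    (hreach : (⋃ t : ℕ, f^[t] '' X0) ⊆ X)
    (Y : ℕ → Set (Fin n → ℝ))
    (hY0 : Y 0 = X0)
    (hYt : ∀ t : ℕ, 1 ≤ t → Y t = f^[t] '' X0 \ ⋃ s ∈ Finset.range t, f^[s] '' X0) :
    ∀ t : ℕ, ∃ μ0t : Measure (Fin n → ℝ), IsFiniteMeasure μ0t ∧ μ0t X0ᶜ = 0 ∧
      Measure.map (f^[t]) μ0t = volume.restrict (Y t) ∧
      volume.restrict (Y t) + (∑ i ∈ Finset.range t, Measure.map (f^[i]) μ0t)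
        = Measure.map f (∑ i ∈ Finset.range t, Measure.map (f^[i]) μ0t) + μ0t := by
  have hfd : Differentiable ℝ f := by
    rw [differentiable_pi]
    intro i
    obtain ⟨p, hp⟩ := hfpoly i
    have h : (fun x => f x i) = fun x => MvPolynomial.eval x p := funext hp
    rw [h]; exact mvpoly_differentiable p
  have hfm : Measurable f := hfd.continuous.measurable
  have hitd : ∀ s : ℕ, Differentiable ℝ (f^[s]) := by
    intro s
    induction s with
    | zero => simpa using differentiable_id
    | succ s ih => rw [Function.iterate_succ']; exact hfd.comp ih
  intro t
  set g := f^[t] with hgdef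
  have hgm : Measurable g := (hitd t).continuous.measurable
  -- basic facts about Y t
  have hYsub : Y t ⊆ g '' X0 := by
    rcases Nat.eq_zero_or_pos t with ht | ht
    · subst ht; rw [hY0]; simp [hgdef]
    · rw [hYt t ht]; exact Set.diff_subset
  have hYX : Y t ⊆ X := hYsub.trans ((Set.subset_iUnion (fun s => f^[s] '' X0) t).trans hreach)
  have hYfin : volume (Y t) < ⊤ :=
    lt_of_le_of_lt (measure_mono hYX) hX.measure_lt_top
  have hYm : MeasurableSet (Y t) := by
    rcases Nat.eq_zero_or_pos t with ht | ht
    · subst ht; rw [hY0]; exact hX0.measurableSet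
    · rw [hYt t ht]
      exact ((hX0.image (hitd t).continuous).measurableSet).diff
        (Finset.measurableSet_biUnion _ fun s _ =>
          (hX0.image (hitd s).continuous).measurableSet)
  set ν : Measure (Fin n → ℝ) := volume.restrict (Y t) with hν
  haveI hνfin : IsFiniteMeasure ν :=
    ⟨by rw [hν, Measure.restrict_apply_univ]; exact hYfin⟩
  set m : Measure (Fin n → ℝ) := volume.restrict X0 with hm
  haveI : IsFiniteMeasure m :=
    ⟨by rw [hm, Measure.restrict_apply_univ]; exact hX0.measure_lt_top⟩
  have hgim : Measurable fun x => (g x, x) := hgm.prodMk measurable_id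
  set ρ : Measure ((Fin n → ℝ) × (Fin n → ℝ)) := Measure.map (fun x => (g x, x)) m with hρ
  haveI : IsFiniteMeasure ρ := by
    constructor
    rw [hρ, Measure.map_apply hgim MeasurableSet.univ]
    exact measure_lt_top m _
  set κ := ρ.condKernel with hκ
  have hfst : ρ.fst = Measure.map g m := by
    rw [hρ]; exact Measure.fst_map_prodMk measurable_id
  -- absolute continuity ν ≪ ρ.fst
  have hac : ν ≪ ρ.fst := by
    rw [hfst]
    refine Measure.AbsolutelyContinuous.mk ?_
    intro A hA hA0
    rw [Measure.map_apply hgm hA, hm, Measure.restrict_apply (hgm hA)] at hA0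
    have h1 : volume (g '' (g ⁻¹' A ∩ X0)) = 0 :=
      addHaar_image_eq_zero_of_differentiableOn_of_addHaar_eq_zero volume
        ((hitd t).differentiableOn) hA0
    rw [hν, Measure.restrict_apply hA]
    refine measure_mono_null ?_ h1
    rintro y ⟨hyA, hyY⟩
    obtain ⟨x, hx0, hgx⟩ := hYsub hyY
    exact ⟨x, ⟨by simpa [hgx] using hyA, hx0⟩, hgx⟩
  -- the bad set
  set S : Set ((Fin n → ℝ) × (Fin n → ℝ)) := {q | q.2 ∈ X0 ∧ g q.2 = q.1} with hS
  have hSm : MeasurableSet S := by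
    refine MeasurableSet.inter ?_ ?_
    · exact measurable_snd hX0.measurableSet
    · exact measurableSet_eq_fun (hgm.comp measurable_snd) measurable_fst
  have hρS : ρ Sᶜ = 0 := by
    rw [hρ, Measure.map_apply hgim hSm.compl]
    have : (fun x => (g x, x)) ⁻¹' Sᶜ ⊆ X0ᶜ := by
      intro x hx
      exact fun hx0 => hx ⟨hx0, rfl⟩
    refine measure_mono_null this ?_
    rw [hm, Measure.restrict_apply hX0.measurableSet.compl]
    simp
  -- a.e. fibre property
  have hdis : ρ.fst ⊗ₘ κ = ρ := ρ.disintegrate _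
  have hae0 : ∀ᵐ y ∂ρ.fst, κ y (Prod.mk y ⁻¹' Sᶜ) = 0 := by
    have h2 : (ρ.fst ⊗ₘ κ) Sᶜ = 0 := by rw [hdis]; exact hρS
    rw [Measure.compProd_apply hSm.compl] at h2
    have hmeas : Measurable fun y => κ y (Prod.mk y ⁻¹' Sᶜ) :=
      Kernel.measurable_kernel_prodMk_left hSm.compl
    rw [lintegral_eq_zero_iff hmeas] at h2
    exact h2
  have haeν : ∀ᵐ y ∂ν, κ y {x | x ∈ X0 ∧ g x = y}ᶜ = 0 := by
    have h' : ∀ᵐ y ∂ν, κ y (Prod.mk y ⁻¹' Sᶜ) = 0 := hac.ae_le hae0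
    refine h'.mono fun y hy => ?_
    have he : Prod.mk y ⁻¹' Sᶜ = {x | x ∈ X0 ∧ g x = y}ᶜ := by
      ext x
      simp [hS, Set.mem_preimage, eq_comm]
    rw [← he]
    exact hy
  -- the candidate measure
  set μ0 : Measure (Fin n → ℝ) := ν.bind κ with hμ0
  have hbind : ∀ A : Set (Fin n → ℝ), MeasurableSet A → μ0 A = ∫⁻ y, κ y A ∂ν :=
    fun A hA => Measure.bind_apply hA κ.measurable.aemeasurable
  haveI hκM : IsMarkovKernel κ := inferInstance
  have hfin : IsFiniteMeasure μ0 := by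
    constructor
    rw [hbind _ MeasurableSet.univ]
    simp only [measure_univ, lintegral_one]
    exact measure_lt_top ν _
  have hout : μ0 X0ᶜ = 0 := by
    rw [hbind _ hX0.measurableSet.compl]
    have h0 : ∀ᵐ y ∂ν, κ y X0ᶜ = 0 :=
      haeν.mono fun y hy =>
        measure_mono_null
          (show X0ᶜ ⊆ {x | x ∈ X0 ∧ g x = y}ᶜ from fun x hx h2 => hx h2.1) hy
    rw [lintegral_eq_zero_iff (κ.measurable_coe hX0.measurableSet.compl)]
    exact h0
  -- pushforward property
  have hmap : Measure.map g μ0 = ν := by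
    ext A hA
    rw [Measure.map_apply hgm hA, hbind _ (hgm hA)]
    have hind : ∀ᵐ y ∂ν, κ y (g ⁻¹' A) = A.indicator (1 : (Fin n → ℝ) → ℝ≥0∞) y := by
      refine haeν.mono fun y hy => ?_
      have h1 : κ y (g ⁻¹' A ∩ {x | x ∈ X0 ∧ g x = y}) = κ y (g ⁻¹' A) :=
        measure_inter_conull hy
      by_cases hyA : y ∈ A
      · have h2 : g ⁻¹' A ∩ {x | x ∈ X0 ∧ g x = y} = {x | x ∈ X0 ∧ g x = y} := by
          ext x
          refine ⟨fun h => h.2, fun h => ⟨?_, h⟩⟩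
          simp only [Set.mem_preimage, h.2]
          exact hyA
        have h3 : κ y (Set.univ ∩ {x | x ∈ X0 ∧ g x = y}) = κ y Set.univ :=
          measure_inter_conull hy
        rw [Set.univ_inter] at h3
        rw [← h1, h2, h3, measure_univ, Set.indicator_of_mem hyA, Pi.one_apply]
      · have h2 : g ⁻¹' A ∩ {x | x ∈ X0 ∧ g x = y} = ∅ := by
          refine Set.eq_empty_iff_forall_notMem.mpr fun x hx => hyA ?_
          exact hx.2.2 ▸ hx.1
        rw [← h1, h2, measure_empty, Set.indicator_of_notMem hyA]
    rw [lintegral_congr_ae hind, lintegral_indicator_one hA]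
  refine ⟨μ0, hfin, hout, hmap, ?_⟩
  -- telescoping Liouville identity
  have hsum : Measure.map f (∑ i ∈ Finset.range t, Measure.map (f^[i]) μ0)
      = ∑ i ∈ Finset.range t, Measure.map (f^[i + 1]) μ0 := by
    rw [measure_map_finset_sum hfm]
    refine Finset.sum_congr rfl fun i _ => ?_
    rw [Measure.map_map hfm (hitd i).continuous.measurable, ← Function.iterate_succ' f i]
  calc volume.restrict (Y t) + ∑ i ∈ Finset.range t, Measure.map (f^[i]) μ0
      = ∑ i ∈ Finset.range (t + 1), Measure.map (f^[i]) μ0 := by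
        rw [Finset.sum_range_succ, ← hν, ← hmap, hgdef, add_comm]
    _ = ∑ i ∈ Finset.range t, Measure.map (f^[i + 1]) μ0 + Measure.map (f^[0]) μ0 :=
        Finset.sum_range_succ' _ _
    _ = Measure.map f (∑ i ∈ Finset.range t, Measure.map (f^[i]) μ0) + μ0 := by
        rw [hsum]
        congr 1
        simp [Measure.map_id]
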